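/- arXiv:1910.14478 — 3 statements merged into one kernel-verified Lean document; each statement's English description precedes it below -/
import Mathlib

section
/- Let G be a connected graph on n vertices and k a positive integer such that every set of k vertices has total degree greater than n. If A is a set of vertices with pairwise distances at least 3, then |A| < k. -/
theorem card_lt_of_pairwise_dist_ge_three {V : Type*} [Fintype V] [DecidableEq V]
    (G : SimpleGraph V) [DecidableRel G.Adj] (hG : G.Connected) (k : ℕ) (hk : 0 < k)
    (hdeg : ∀ S : Finset V, S.card = k → Fintype.card V < ∑ v ∈ S, G.degree v)
    (A : Finset V) (hA : ∀ u ∈ A, ∀ v ∈ A, u ≠ v → 3 ≤ G.dist u v) :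
    A.card < k := by
  by_contra h
  push_neg at h
  obtain ⟨S, hSA, hS⟩ := Finset.exists_subset_card_eq h
  have hdisj : ∀ u ∈ A, ∀ v ∈ A, u ≠ v →
      Disjoint (insert u (G.neighborFinset u)) (insert v (G.neighborFinset v)) := by
    intro u hu v hv huv
    rw [Finset.disjoint_left]
    intro w hwu hwv
    have h1 : G.dist u w ≤ 1 := by
      rcases Finset.mem_insert.1 hwu with rfl | hadj
      · simp [SimpleGraph.dist_self]
      · exact le_of_eq (SimpleGraph.dist_eq_one_iff_adj.2
          ((G.mem_neighborFinset _ _).1 hadj))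
    have h2 : G.dist w v ≤ 1 := by
      rcases Finset.mem_insert.1 hwv with rfl | hadj
      · simp [SimpleGraph.dist_self]
      · rw [SimpleGraph.dist_comm]
        exact le_of_eq (SimpleGraph.dist_eq_one_iff_adj.2
          (G.mem_neighborFinset _ _ |>.1 hadj))
    have := hG.dist_triangle (u := u) (v := w) (w := v)
    have := hA u hu v hv huv
    omega
  have key : ∑ v ∈ A, (G.degree v + 1) ≤ Fintype.card V := by
    calc ∑ v ∈ A, (G.degree v + 1)
        = ∑ v ∈ A, (insert v (G.neighborFinset v)).card := by
          refine Finset.sum_congr rfl fun v _ => ?_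
          rw [Finset.card_insert_of_notMem (by simp), SimpleGraph.card_neighborFinset_eq_degree]
      _ = (A.biUnion fun v => insert v (G.neighborFinset v)).card :=
          (Finset.card_biUnion hdisj).symm
      _ ≤ Fintype.card V := Finset.card_le_univ _
  have hsum : ∑ v ∈ S, G.degree v ≤ ∑ v ∈ A, G.degree v :=
    Finset.sum_le_sum_of_subset hSA
  have hlt := hdeg S hS
  have hA1 : ∑ v ∈ A, (G.degree v + 1) = ∑ v ∈ A, G.degree v + A.card := by
    rw [Finset.sum_add_distrib, Finset.sum_const, smul_eq_mul, mul_one]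
  omega
end

section
/- Let G be a connected graph on n vertices and k an integer such that every k-subset of vertices has total degree greater than n. Then for any set S of k vertices, there exists a connected subgraph (Steiner tree) of G containing all of S with at most 5k vertices. -/
set_option linter.unusedSectionVars false

open Finset

section Aux
variable {V : Type*} [Fintype V] [DecidableEq V] (G : SimpleGraph V) [DecidableRel G.Adj]

private lemma ST_dist_getVert_le (hG : G.Connected) {u v : V} (w : G.Walk u v) (j : ℕ) :
    G.dist u (w.getVert j) ≤ j := by
  induction j with
  | zero => simp [SimpleGraph.Walk.getVert_zero]
  | succ n ih =>
    rcases le_or_gt w.length n with h | h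
    · rw [w.getVert_of_length_le (le_trans h (Nat.le_succ n))]
      rw [w.getVert_of_length_le h] at ih
      exact le_trans ih (Nat.le_succ n)
    · have hadj := w.adj_getVert_succ h
      have h1 : G.dist (w.getVert n) (w.getVert (n+1)) ≤ 1 :=
        SimpleGraph.dist_le hadj.toWalk
      have h2 := hG.dist_triangle (u := u) (v := w.getVert n) (w := w.getVert (n+1))
      omega

private lemma ST_getVert_dist_le (hG : G.Connected) {u v : V} (w : G.Walk u v) {j : ℕ}
    (hj : j ≤ w.length) : G.dist (w.getVert j) v ≤ w.length - j := by
  have h1 : w.reverse.getVert (w.length - j) = w.getVert j := by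
    rw [SimpleGraph.Walk.getVert_reverse]
    congr 1
    omega
  rw [← h1, SimpleGraph.dist_comm]
  exact ST_dist_getVert_le G hG w.reverse _

private lemma ST_disjoint_nbhd (hG : G.Connected) {u v : V} (h : 3 ≤ G.dist u v) :
    Disjoint (G.neighborFinset u) (G.neighborFinset v) := by
  rw [Finset.disjoint_left]
  intro z hzu hzv
  rw [SimpleGraph.mem_neighborFinset] at hzu hzv
  have h1 : G.dist u z ≤ 1 := SimpleGraph.dist_le hzu.toWalk
  have h2 : G.dist z v ≤ 1 := SimpleGraph.dist_le hzv.symm.toWalk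
  have h3 := hG.dist_triangle (u := u) (v := z) (w := v)
  omega

private lemma ST_induce_singleton_connected (v : V) :
    (G.induce ({v} : Set V)).Connected := by
  rw [SimpleGraph.connected_iff]
  refine ⟨fun a b => ?_, ⟨⟨v, rfl⟩⟩⟩
  have : a = b := by
    rcases a with ⟨a, ha⟩; rcases b with ⟨b, hb⟩
    simp only [Set.mem_singleton_iff] at ha hb
    subst ha; subst hb; rfl
  rw [this]

private lemma ST_connect_union {A B : Finset V} {a b : V} (ha : a ∈ A) (hb : b ∈ B)
    (hA : (G.induce (A : Set V)).Connected) (hB : (G.induce (B : Set V)).Connected)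
    (w : G.Walk a b) :
    (G.induce ((A ∪ w.support.toFinset ∪ B : Finset V) : Set V)).Connected := by
  have hset : ((A ∪ w.support.toFinset ∪ B : Finset V) : Set V)
      = ((A : Set V) ∪ (w.support.toFinset : Set V)) ∪ (B : Set V) := by
    ext z; simp [Finset.coe_union]; tauto
  rw [hset]
  have hsupp : (G.induce ((w.support.toFinset : Finset V) : Set V)).Connected := by
    have hset2 : ((w.support.toFinset : Finset V) : Set V) = {v | v ∈ w.support} := by
      ext z; simp
    rw [hset2]
    exact w.connected_induce_support
  exact SimpleGraph.induce_union_connected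
    (SimpleGraph.induce_union_connected hA.preconnected hsupp.preconnected
      ⟨a, ha, by simp [SimpleGraph.Walk.start_mem_support]⟩).preconnected hB.preconnected
    ⟨b, Or.inr (by simp [SimpleGraph.Walk.end_mem_support]), hb⟩


private lemma ST_merge_step (hG : G.Connected) {pieces : Finset (Finset V)} {P Q : Finset V}
    {x y : V}
    (hP : P ∈ pieces) (hQ : Q ∈ pieces) (hPQ : P ≠ Q) (hx : x ∈ P) (hy : y ∈ Q)
    (hne : ∀ T ∈ pieces, T.Nonempty)
    (hconn : ∀ T ∈ pieces, (G.induce (T : Set V)).Connected)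
    (w : G.Walk x y) (hpath : w.IsPath) (hlen0 : x = y → w.length = 0) :
    ∃ pieces' : Finset (Finset V),
      pieces'.Nonempty ∧
      (∀ T ∈ pieces', T.Nonempty) ∧
      (∀ T ∈ pieces', (G.induce (T : Set V)).Connected) ∧
      pieces'.card + 1 ≤ pieces.card ∧
      pieces.biUnion id ⊆ pieces'.biUnion id ∧
      w.support.toFinset ⊆ pieces'.biUnion id ∧
      (pieces'.biUnion id).card ≤ (pieces.biUnion id).card + (w.length - 1) := by
  classical
  set newP : Finset V := P ∪ w.support.toFinset ∪ Q with hnewP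
  set pieces' : Finset (Finset V) := insert newP ((pieces.erase P).erase Q) with hpieces'
  have hQereP : Q ∈ pieces.erase P := Finset.mem_erase.mpr ⟨fun h => hPQ h.symm, hQ⟩
  have hsubPieces : (pieces.erase P).erase Q ⊆ pieces :=
    Finset.Subset.trans (Finset.erase_subset _ _) (Finset.erase_subset _ _)
  refine ⟨pieces', ⟨newP, Finset.mem_insert_self _ _⟩, ?_, ?_, ?_, ?_, ?_, ?_⟩
  · intro T hT
    rcases Finset.mem_insert.mp hT with h | h
    · exact ⟨x, by simp [h, hnewP, hx]⟩
    · exact hne T (hsubPieces h)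
  · intro T hT
    rcases Finset.mem_insert.mp hT with h | h
    · rw [h, hnewP]
      exact ST_connect_union G hx hy (hconn P hP) (hconn Q hQ) w
    · exact hconn T (hsubPieces h)
  · have h1 : ((pieces.erase P).erase Q).card + 2 = pieces.card := by
      rw [Finset.card_erase_of_mem hQereP, Finset.card_erase_of_mem hP]
      have : 2 ≤ pieces.card := Finset.one_lt_card.mpr ⟨P, hP, Q, hQ, hPQ⟩
      omega
    have h2 : pieces'.card ≤ ((pieces.erase P).erase Q).card + 1 :=
      Finset.card_insert_le _ _
    omega
  · intro z hz
    rcases Finset.mem_biUnion.mp hz with ⟨T, hT, hzT⟩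
    by_cases hTP : T = P
    · exact Finset.mem_biUnion.mpr ⟨newP, Finset.mem_insert_self _ _,
        Finset.mem_union_left _ (Finset.mem_union_left _ (hTP ▸ hzT))⟩
    by_cases hTQ : T = Q
    · exact Finset.mem_biUnion.mpr ⟨newP, Finset.mem_insert_self _ _,
        Finset.mem_union_right _ (hTQ ▸ hzT)⟩
    · exact Finset.mem_biUnion.mpr ⟨T,
        Finset.mem_insert_of_mem (Finset.mem_erase.mpr ⟨hTQ, Finset.mem_erase.mpr ⟨hTP, hT⟩⟩),
        hzT⟩
  · intro z hz
    exact Finset.mem_biUnion.mpr ⟨newP, Finset.mem_insert_self _ _,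
      Finset.mem_union_left _ (Finset.mem_union_right _ hz)⟩
  · -- cardinality bound
    have hsub2 : pieces'.biUnion id ⊆ (pieces.biUnion id)
        ∪ (w.support.toFinset \ ({x, y} : Finset V)) := by
      intro z hz
      rcases Finset.mem_biUnion.mp hz with ⟨T, hT, hzT⟩
      rcases Finset.mem_insert.mp hT with h | h
      · rw [h, hnewP] at hzT
        simp only [id_eq, Finset.mem_union] at hzT
        rcases hzT with (h1 | h1) | h1
        · exact Finset.mem_union_left _ (Finset.mem_biUnion.mpr ⟨P, hP, h1⟩)
        · by_cases hzx : z = x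
          · exact Finset.mem_union_left _ (Finset.mem_biUnion.mpr ⟨P, hP, hzx ▸ hx⟩)
          by_cases hzy : z = y
          · exact Finset.mem_union_left _ (Finset.mem_biUnion.mpr ⟨Q, hQ, hzy ▸ hy⟩)
          · exact Finset.mem_union_right _ (Finset.mem_sdiff.mpr ⟨h1, by simp [hzx, hzy]⟩)
        · exact Finset.mem_union_left _ (Finset.mem_biUnion.mpr ⟨Q, hQ, h1⟩)
      · exact Finset.mem_union_left _ (Finset.mem_biUnion.mpr ⟨T, hsubPieces h, hzT⟩)
    have hcard1 := Finset.card_le_card hsub2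
    have hcard2 := Finset.card_union_le (pieces.biUnion id)
      (w.support.toFinset \ ({x, y} : Finset V))
    have hsuppcard : w.support.toFinset.card = w.length + 1 := by
      rw [List.card_toFinset, hpath.support_nodup.dedup]
      exact SimpleGraph.Walk.length_support w
    have hxy_sub : ({x, y} : Finset V) ⊆ w.support.toFinset := by
      intro z hz
      rcases Finset.mem_insert.mp hz with h | h
      · simp [h, SimpleGraph.Walk.start_mem_support]
      · simp [Finset.mem_singleton.mp h, SimpleGraph.Walk.end_mem_support]
    have hsd := Finset.card_sdiff_of_subset hxy_sub
    rcases eq_or_ne x y with hxy | hxy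
    · have h0 : w.length = 0 := hlen0 hxy
      have : ({x, y} : Finset V).card = 1 := by
        rw [hxy]; simp
      omega
    · have hd1 : 1 ≤ w.length := by
        rcases Nat.eq_zero_or_pos w.length with h0 | h1
        · exfalso
          have := w.eq_of_length_eq_zero h0
          exact hxy this
        · exact h1
      have : ({x, y} : Finset V).card = 2 := Finset.card_pair hxy
      omega


private lemma ST_phase1 (hG : G.Connected) :
    ∀ (N : ℕ) (pieces : Finset (Finset V)),
    pieces.card = N →
    (∀ T ∈ pieces, T.Nonempty) →
    (∀ T ∈ pieces, (G.induce (T : Set V)).Connected) →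
    ∃ pieces' : Finset (Finset V),
      (∀ T ∈ pieces', T.Nonempty) ∧
      (∀ T ∈ pieces', (G.induce (T : Set V)).Connected) ∧
      pieces.biUnion id ⊆ pieces'.biUnion id ∧
      (pieces'.biUnion id).card + pieces'.card ≤ (pieces.biUnion id).card + pieces.card ∧
      (∀ P ∈ pieces', ∀ Q ∈ pieces', P ≠ Q → ∀ x ∈ P, ∀ y ∈ Q, 3 ≤ G.dist x y) := by
  intro N
  induction N using Nat.strong_induction_on with
  | _ N IH =>
    intro pieces hN hne hconn
    by_cases hclose : ∃ P ∈ pieces, ∃ Q ∈ pieces, P ≠ Q ∧ ∃ x ∈ P, ∃ y ∈ Q, G.dist x y ≤ 2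
    · obtain ⟨P, hP, Q, hQ, hPQ, x, hx, y, hy, hdxy⟩ := hclose
      obtain ⟨w0, hw0⟩ := hG.exists_walk_length_eq_dist x y
      set p := w0.bypass with hp
      have hp_path : p.IsPath := SimpleGraph.Walk.bypass_isPath w0
      have hp_len : p.length = G.dist x y := by
        have h1 : p.length ≤ w0.length := SimpleGraph.Walk.length_bypass_le w0
        have h2 := SimpleGraph.dist_le p
        omega
      have hlen0 : x = y → p.length = 0 := by
        intro h
        rw [hp_len, h, SimpleGraph.dist_self]
      obtain ⟨pieces2, hne2', hne2, hconn2, hcard2, hsub2, hsupp2, hbU2⟩ :=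
        ST_merge_step G hG hP hQ hPQ hx hy hne hconn p hp_path hlen0
      obtain ⟨pieces', hA, hB, hC, hD, hE⟩ :=
        IH pieces2.card (by omega) pieces2 rfl hne2 hconn2
      refine ⟨pieces', hA, hB, Finset.Subset.trans hsub2 hC, ?_, hE⟩
      have : p.length - 1 ≤ 1 := by omega
      omega
    · push_neg at hclose
      exact ⟨pieces, hne, hconn, Finset.Subset.refl _, le_refl _,
        fun P hP Q hQ hPQ x hx y hy => by
          have := hclose P hP Q hQ hPQ x hx y hy
          omega⟩


private lemma ST_phase2 (hG : G.Connected) :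
    ∀ (N : ℕ) (pieces : Finset (Finset V)) (R : Finset V),
    pieces.card = N → pieces.Nonempty →
    (∀ T ∈ pieces, T.Nonempty) →
    (∀ T ∈ pieces, (G.induce (T : Set V)).Connected) →
    (∀ r ∈ R, ∃ T ∈ pieces, r ∈ T) →
    (∀ u ∈ R, ∀ v ∈ R, u ≠ v → Disjoint (G.neighborFinset u) (G.neighborFinset v)) →
    ∃ (t : Finset V) (R' : Finset V),
      pieces.biUnion id ⊆ t ∧ (G.induce (t : Set V)).Connected ∧
      (∀ u ∈ R', ∀ v ∈ R', u ≠ v → Disjoint (G.neighborFinset u) (G.neighborFinset v)) ∧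
      t.card + 3 * R.card ≤ (pieces.biUnion id).card + 4 * (pieces.card - 1) + 3 * R'.card := by
  intro N
  induction N using Nat.strong_induction_on with
  | _ N IH =>
    intro pieces R hN hnemp hne hconn hcov hpack
    rcases le_or_gt pieces.card 1 with hm | hm
    · -- base case: exactly one piece
      have h1 : pieces.card = 1 := le_antisymm hm (Finset.card_pos.mpr hnemp)
      obtain ⟨P, hPeq⟩ := Finset.card_eq_one.mp h1
      subst hPeq
      refine ⟨P, R, ?_, ?_, hpack, ?_⟩
      · rw [Finset.singleton_biUnion]; exact Finset.Subset.refl _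
      · exact hconn P (Finset.mem_singleton_self P)
      · rw [Finset.singleton_biUnion]; simp
    · -- at least two pieces
      obtain ⟨P0, hP0, Q0, hQ0, hPQ0⟩ := Finset.one_lt_card.mp hm
      set cand : Finset (V × V) :=
        pieces.offDiag.biUnion (fun PQ => PQ.1 ×ˢ PQ.2) with hcand
      have hcand_mem : ∀ {P Q : Finset V} {u v : V}, P ∈ pieces → Q ∈ pieces → P ≠ Q →
          u ∈ P → v ∈ Q → (u, v) ∈ cand := by
        intro P Q u v hP hQ hPQ hu hv
        exact Finset.mem_biUnion.mpr ⟨(P, Q), Finset.mem_offDiag.mpr ⟨hP, hQ, hPQ⟩,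
          Finset.mem_product.mpr ⟨hu, hv⟩⟩
      have hcand_ne : cand.Nonempty := by
        obtain ⟨u, hu⟩ := hne P0 hP0
        obtain ⟨v, hv⟩ := hne Q0 hQ0
        exact ⟨_, hcand_mem hP0 hQ0 hPQ0 hu hv⟩
      obtain ⟨⟨x, y⟩, hxyc, hmin⟩ :=
        Finset.exists_min_image cand (fun pr => G.dist pr.1 pr.2) hcand_ne
      set d := G.dist x y with hd
      have hd_le : ∀ {P Q : Finset V} {u v : V}, P ∈ pieces → Q ∈ pieces → P ≠ Q →
          u ∈ P → v ∈ Q → d ≤ G.dist u v := by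
        intro P Q u v hP hQ hPQ hu hv
        exact hmin (u, v) (hcand_mem hP hQ hPQ hu hv)
      obtain ⟨⟨P, Q⟩, hPQmem, hxyPQ⟩ := Finset.mem_biUnion.mp hxyc
      obtain ⟨hP, hQ, hPQ⟩ := Finset.mem_offDiag.mp hPQmem
      have hx : x ∈ P := (Finset.mem_product.mp hxyPQ).1
      have hy : y ∈ Q := (Finset.mem_product.mp hxyPQ).2
      have hdeq : G.dist x y = d := rfl
      obtain ⟨w0, hw0⟩ := hG.exists_walk_length_eq_dist x y
      set p := w0.bypass with hpdef
      have hp_path : p.IsPath := SimpleGraph.Walk.bypass_isPath w0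
      have hp_len : p.length = d := by
        have h1 : p.length ≤ w0.length := SimpleGraph.Walk.length_bypass_le w0
        have h2 := SimpleGraph.dist_le p
        omega
      have hlen0 : x = y → p.length = 0 := by
        intro h; rw [hp_len, ← hdeq, h, SimpleGraph.dist_self]
      obtain ⟨pieces2, hnemp2, hne2, hconn2, hcard2, hsub2, hsupp2, hbU2⟩ :=
        ST_merge_step G hG hP hQ hPQ hx hy hne hconn p hp_path hlen0
      have hcov2 : ∀ r ∈ R, ∃ T ∈ pieces2, r ∈ T := by
        intro r hr
        obtain ⟨T, hT, hrT⟩ := hcov r hr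
        obtain ⟨T', hT', hrT'⟩ := Finset.mem_biUnion.mp
          (hsub2 (Finset.mem_biUnion.mpr ⟨T, hT, hrT⟩))
        exact ⟨T', hT', hrT'⟩
      rcases le_or_gt d 5 with hd5 | hd6
      · -- cheap merge, no new packing vertices
        obtain ⟨t, R', htsub, htconn, hR'pack, hineq⟩ :=
          IH pieces2.card (by omega) pieces2 R rfl hnemp2 hne2 hconn2 hcov2 hpack
        refine ⟨t, R', Finset.Subset.trans hsub2 htsub, htconn, hR'pack, ?_⟩
        omega
      · -- expensive merge : collect middles
        set a := d / 3 - 1 with ha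
        have hgv1 : ∀ j : ℕ, G.dist x (p.getVert j) ≤ j := fun j => ST_dist_getVert_le G hG p j
        have hgv2 : ∀ j : ℕ, j ≤ d → G.dist (p.getVert j) y ≤ d - j := by
          intro j hj
          have h := ST_getVert_dist_le G hG p (j := j) (by omega)
          omega
        have hkey : ∀ j : ℕ, 3 ≤ j → j ≤ d - 3 → ∀ T ∈ pieces, ∀ c ∈ T,
            3 ≤ G.dist (p.getVert j) c := by
          intro j hj3 hjd T hT c hc
          by_cases hTP : T = P
          · have h1 : d ≤ G.dist c y := hd_le hP hQ hPQ (by rw [← hTP]; exact hc) hy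
            have h2 : G.dist c y ≤ G.dist c (p.getVert j) + G.dist (p.getVert j) y :=
              hG.dist_triangle
            have h3 : G.dist (p.getVert j) y ≤ d - j := hgv2 j (by omega)
            have h4 : G.dist c (p.getVert j) = G.dist (p.getVert j) c := SimpleGraph.dist_comm
            omega
          · have h1 : d ≤ G.dist x c := hd_le hP hT (fun h => hTP h.symm) hx hc
            have h2 : G.dist x c ≤ G.dist x (p.getVert j) + G.dist (p.getVert j) c :=
              hG.dist_triangle
            have h3 := hgv1 j
            omega
        have hmid : ∀ i i' : ℕ, i < a → i' < a → i < i' →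
            3 ≤ G.dist (p.getVert (3*i+3)) (p.getVert (3*i'+3)) := by
          intro i i' hi hi' hii
          have h1 : G.dist x y ≤ G.dist x (p.getVert (3*i+3))
              + G.dist (p.getVert (3*i+3)) y := hG.dist_triangle
          have h2 : G.dist (p.getVert (3*i+3)) y ≤
              G.dist (p.getVert (3*i+3)) (p.getVert (3*i'+3))
              + G.dist (p.getVert (3*i'+3)) y := hG.dist_triangle
          have h3 := hgv1 (3*i+3)
          have h4 : G.dist (p.getVert (3*i'+3)) y ≤ d - (3*i'+3) := hgv2 (3*i'+3) (by omega)
          omega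
        set M := (Finset.range a).image (fun i => p.getVert (3*i+3)) with hM
        have hMfar : ∀ z ∈ M, ∀ T ∈ pieces, ∀ c ∈ T, 3 ≤ G.dist z c := by
          intro z hz T hT c hc
          obtain ⟨i, hi, hzi⟩ := Finset.mem_image.mp hz
          have hir := Finset.mem_range.mp hi
          rw [← hzi]
          exact hkey (3*i+3) (by omega) (by omega) T hT c hc
        have hMR : Disjoint R M := by
          rw [Finset.disjoint_right]
          intro z hzM hzR
          obtain ⟨T, hT, hzT⟩ := hcov z hzR
          have h := hMfar z hzM T hT z hzT
          rw [SimpleGraph.dist_self] at h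
          omega
        have hMcard : M.card = a := by
          rw [hM, Finset.card_image_of_injOn, Finset.card_range]
          intro i hi i' hi' hEq
          by_contra hne'
          simp only at hEq
          rcases Nat.lt_or_ge i i' with h | h
          · have hh := hmid i i' (Finset.mem_range.mp (Finset.mem_coe.mp hi))
              (Finset.mem_range.mp (Finset.mem_coe.mp hi')) h
            rw [hEq, SimpleGraph.dist_self] at hh
            omega
          · have h' : i' < i := by omega
            have hh := hmid i' i (Finset.mem_range.mp (Finset.mem_coe.mp hi'))
              (Finset.mem_range.mp (Finset.mem_coe.mp hi)) h'
            rw [hEq, SimpleGraph.dist_self] at hh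
            omega
        have hMsupp : ∀ z ∈ M, z ∈ pieces2.biUnion id := by
          intro z hz
          obtain ⟨i, hi, hzi⟩ := Finset.mem_image.mp hz
          have hir := Finset.mem_range.mp hi
          apply hsupp2
          rw [List.mem_toFinset, ← hzi]
          exact SimpleGraph.Walk.mem_support_iff_exists_getVert.mpr ⟨3*i+3, rfl, by omega⟩
        have hcov2' : ∀ r ∈ R ∪ M, ∃ T ∈ pieces2, r ∈ T := by
          intro r hr
          rcases Finset.mem_union.mp hr with h | h
          · exact hcov2 r h
          · obtain ⟨T', hT', hrT'⟩ := Finset.mem_biUnion.mp (hMsupp r h)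
            exact ⟨T', hT', hrT'⟩
        have hpack2 : ∀ u ∈ R ∪ M, ∀ v ∈ R ∪ M, u ≠ v →
            Disjoint (G.neighborFinset u) (G.neighborFinset v) := by
          intro u hu v hv huv
          rcases Finset.mem_union.mp hu with hu' | hu' <;>
            rcases Finset.mem_union.mp hv with hv' | hv'
          · exact hpack u hu' v hv' huv
          · obtain ⟨T, hT, huT⟩ := hcov u hu'
            exact (ST_disjoint_nbhd G hG (hMfar v hv' T hT u huT)).symm
          · obtain ⟨T, hT, hvT⟩ := hcov v hv'
            exact ST_disjoint_nbhd G hG (hMfar u hu' T hT v hvT)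
          · obtain ⟨i, hi, hui⟩ := Finset.mem_image.mp hu'
            obtain ⟨i', hi', hvi⟩ := Finset.mem_image.mp hv'
            have hir := Finset.mem_range.mp hi
            have hir' := Finset.mem_range.mp hi'

            rcases Nat.lt_trichotomy i i' with h | h | h
            · rw [← hui, ← hvi]
              exact ST_disjoint_nbhd G hG (hmid i i' hir hir' h)
            · exfalso; apply huv; rw [← hui, ← hvi, h]
            · rw [← hui, ← hvi]
              exact (ST_disjoint_nbhd G hG (hmid i' i hir' hir h)).symm
        have hR2card : (R ∪ M).card = R.card + a := by
          rw [Finset.card_union_of_disjoint hMR, hMcard]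
        obtain ⟨t, R', htsub, htconn, hR'pack, hineq⟩ :=
          IH pieces2.card (by omega) pieces2 (R ∪ M) rfl hnemp2 hne2 hconn2 hcov2' hpack2
        refine ⟨t, R', Finset.Subset.trans hsub2 htsub, htconn, hR'pack, ?_⟩
        rw [hR2card] at hineq
        omega

end Aux

theorem steiner_tree_le_five_k {V : Type*} [Fintype V] [DecidableEq V]
    (G : SimpleGraph V) [DecidableRel G.Adj] (hG : G.Connected) (k : ℕ) (hk : 0 < k)
    (hdeg : ∀ S : Finset V, S.card = k → Fintype.card V < ∑ v ∈ S, G.degree v)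
    (S : Finset V) (hS : S.card = k) :
    ∃ t : Finset V, ↑S ⊆ (↑t : Set V) ∧ (G.induce (↑t : Set V)).Connected ∧
      t.card ≤ 5 * k := by
  classical
  have hSne : S.Nonempty := by
    rw [← Finset.card_pos, hS]; exact hk
  -- the packing bound from the degree hypothesis
  have hpackbd : ∀ R : Finset V,
      (∀ u ∈ R, ∀ v ∈ R, u ≠ v → Disjoint (G.neighborFinset u) (G.neighborFinset v)) →
      R.card + 1 ≤ k := by
    intro R hp
    by_contra hcon
    push_neg at hcon
    obtain ⟨A, hAR, hAc⟩ := Finset.exists_subset_card_eq (show k ≤ R.card by omega)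
    have hA := hdeg A hAc
    have hsum : ∑ v ∈ A, G.degree v = (A.biUnion (fun v => G.neighborFinset v)).card := by
      rw [Finset.card_biUnion (fun u hu v hv huv => hp u (hAR hu) v (hAR hv) huv)]
      rfl
    have hle : (A.biUnion (fun v => G.neighborFinset v)).card ≤ Fintype.card V := by
      rw [← Finset.card_univ]
      exact Finset.card_le_card (Finset.subset_univ _)
    omega
  -- initial pieces : singletons of S
  set pieces0 : Finset (Finset V) := S.image (fun v => ({v} : Finset V)) with hpieces0
  have hbU0 : pieces0.biUnion id = S := by
    ext z
    simp [hpieces0]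
  have hne0 : ∀ T ∈ pieces0, T.Nonempty := by
    intro T hT
    obtain ⟨v, _, hv⟩ := Finset.mem_image.mp hT
    exact ⟨v, by rw [← hv]; exact Finset.mem_singleton_self v⟩
  have hconn0 : ∀ T ∈ pieces0, (G.induce (T : Set V)).Connected := by
    intro T hT
    obtain ⟨v, _, hv⟩ := Finset.mem_image.mp hT
    rw [← hv]
    have hc : ((({v} : Finset V)) : Set V) = ({v} : Set V) := Finset.coe_singleton v
    rw [hc]
    exact ST_induce_singleton_connected G v
  obtain ⟨pieces1, hne1, hconn1, hsub1, hcard1, hfar1⟩ :=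
    ST_phase1 G hG pieces0.card pieces0 rfl hne0 hconn0
  have hScov : S ⊆ pieces1.biUnion id := by
    rw [← hbU0]; exact hsub1
  have hnemp1 : pieces1.Nonempty := by
    obtain ⟨z, hz⟩ := hSne
    obtain ⟨T, hT, _⟩ := Finset.mem_biUnion.mp (hScov hz)
    exact ⟨T, hT⟩
  -- representatives
  set R0 : Finset V := pieces1.attach.image (fun T => (hne1 T.1 T.2).choose) with hR0
  have hR0cov : ∀ r ∈ R0, ∃ T ∈ pieces1, r ∈ T := by
    intro r hr
    obtain ⟨T, _, hT⟩ := Finset.mem_image.mp hr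
    exact ⟨T.1, T.2, by rw [← hT]; exact (hne1 T.1 T.2).choose_spec⟩
  have hR0pack : ∀ u ∈ R0, ∀ v ∈ R0, u ≠ v →
      Disjoint (G.neighborFinset u) (G.neighborFinset v) := by
    intro u hu v hv huv
    obtain ⟨T1, _, hT1⟩ := Finset.mem_image.mp hu
    obtain ⟨T2, _, hT2⟩ := Finset.mem_image.mp hv
    have hT1' : (hne1 T1.1 T1.2).choose = u := hT1
    have hT2' : (hne1 T2.1 T2.2).choose = v := hT2
    have hT12 : T1.1 ≠ T2.1 := by
      intro h
      apply huv
      rw [← hT1', ← hT2']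
      exact congrArg (fun T : {x // x ∈ pieces1} => (hne1 T.1 T.2).choose) (Subtype.ext h)
    have hdist := hfar1 T1.1 T1.2 T2.1 T2.2 hT12 _ (hne1 T1.1 T1.2).choose_spec
      _ (hne1 T2.1 T2.2).choose_spec
    rw [hT1', hT2'] at hdist
    exact ST_disjoint_nbhd G hG hdist
  have hR0card : R0.card = pieces1.card := by
    rw [hR0, Finset.card_image_of_injOn, Finset.card_attach]
    intro T1 hT1' T2 hT2' hEq
    by_contra hne'
    have hT12 : T1.1 ≠ T2.1 := fun h => hne' (Subtype.ext h)
    have hEq2 : (hne1 T1.1 T1.2).choose = (hne1 T2.1 T2.2).choose := hEq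
    have hdist := hfar1 T1.1 T1.2 T2.1 T2.2 hT12 _ (hne1 T1.1 T1.2).choose_spec
      _ (hne1 T2.1 T2.2).choose_spec
    rw [hEq2, SimpleGraph.dist_self] at hdist
    omega
  obtain ⟨t, R', htsub, htconn, hR'pack, hineq⟩ :=
    ST_phase2 G hG pieces1.card pieces1 R0 rfl hnemp1 hne1 hconn1 hR0cov hR0pack
  refine ⟨t, ?_, htconn, ?_⟩
  · exact Finset.coe_subset.mpr (Finset.Subset.trans hScov htsub)
  · have h1 := hpackbd R' hR'pack
    have h2 : (pieces0.biUnion id).card = k := by rw [hbU0, hS]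
    have h3 : pieces0.card ≤ k := by
      rw [hpieces0, ← hS]
      exact Finset.card_image_le
    have h4 : 1 ≤ pieces1.card := Finset.card_pos.mpr hnemp1
    omega
end

section
/- For positive integers r₁, …, r_s with k = r₁ + ⋯ + r_s, one has r₁! r₂! ⋯ r_s! ≥ e^{-k} · r₁^{r₂} r₂^{r₃} ⋯ r_{s-1}^{r_s}. -/
open Finset

lemma exp_neg_mul_pow_le_factorial (n : ℕ) :
    Real.exp (-(n : ℝ)) * (n : ℝ) ^ n ≤ (n.factorial : ℝ) := by
  have h := Real.pow_div_factorial_le_exp (x := (n : ℝ)) (Nat.cast_nonneg n) n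
  have hf : (0 : ℝ) < (n.factorial : ℝ) := by positivity
  rw [div_le_iff₀ hf] at h
  rw [Real.exp_neg, inv_mul_le_iff₀ (Real.exp_pos _)]
  linarith [h]

lemma rearrange_sum (s : ℕ) (hs : 1 ≤ s) (r : ℕ → ℕ) (hr : ∀ i < s, 1 ≤ r i) :
    ∑ i ∈ range (s - 1), (r (i + 1) : ℝ) * Real.log (r i) ≤
      ∑ i ∈ range s, (r i : ℝ) * Real.log (r i) := by
  obtain ⟨t, rfl⟩ : ∃ t, s = t + 1 := ⟨s - 1, (Nat.succ_pred_eq_of_pos hs).symm⟩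
  set σ : Equiv.Perm ℕ := (List.range (t + 1)).formPerm with hσdef
  have hσmem : {x | σ x ≠ x} ⊆ ↑(range (t + 1)) := by
    intro x hx
    have := List.support_formPerm_le' (List.range (t + 1)) hx
    simpa using this
  have hmono : MonovaryOn (fun i => (r i : ℝ)) (fun i => Real.log (r i)) (range (t + 1)) := by
    intro i _ j hj hlt
    by_contra h
    push_neg at h
    have hjpos : (0 : ℝ) < (r j : ℝ) := by
      exact_mod_cast hr j (by simpa using hj)
    have : Real.log (r j) ≤ Real.log (r i) := Real.log_le_log hjpos h.le
    exact absurd hlt (not_lt.mpr this)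
  have key := hmono.sum_comp_perm_smul_le_sum_smul hσmem
  simp only [smul_eq_mul] at key
  have hσi : ∀ i < t, σ i = i + 1 := by
    intro i hi
    have h1 : i < (List.range (t + 1)).length := by simpa using Nat.lt_succ_of_lt hi
    have := List.formPerm_apply_getElem (List.range (t + 1)) List.nodup_range i h1
    simpa [List.getElem_range, Nat.mod_eq_of_lt (by omega : i + 1 < t + 1)] using this
  calc ∑ i ∈ range (t + 1 - 1), (r (i + 1) : ℝ) * Real.log (r i)
      = ∑ i ∈ range t, (r (σ i) : ℝ) * Real.log (r i) := by
        apply Finset.sum_congr (by simp)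
        intro i hi
        rw [hσi i (mem_range.mp hi)]
    _ ≤ ∑ i ∈ range (t + 1), (r (σ i) : ℝ) * Real.log (r i) := by
        rw [Finset.sum_range_succ]
        have h1 : (1 : ℝ) ≤ (r t : ℝ) := by exact_mod_cast hr t (by omega)
        have : 0 ≤ (r (σ t) : ℝ) * Real.log (r t) :=
          mul_nonneg (Nat.cast_nonneg _) (Real.log_nonneg h1)
        linarith
    _ ≤ ∑ i ∈ range (t + 1), (r i : ℝ) * Real.log (r i) := key

theorem factorial_prod_ge_exp_neg_mul_cyclic (s : ℕ) (hs : 1 ≤ s) (r : ℕ → ℕ)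
    (hr : ∀ i < s, 1 ≤ r i) (k : ℕ) (hk : k = ∑ i ∈ Finset.range s, r i) :
    Real.exp (-(k : ℝ)) * ∏ i ∈ Finset.range (s - 1), (r i : ℝ) ^ (r (i + 1)) ≤
      ∏ i ∈ Finset.range s, ((r i).factorial : ℝ) := by
  have hrpos : ∀ i < s, (0 : ℝ) < (r i : ℝ) := fun i hi => by
    exact_mod_cast Nat.lt_of_lt_of_le Nat.zero_lt_one (hr i hi)
  have hL : ∏ i ∈ range (s - 1), (r i : ℝ) ^ (r (i + 1)) =
      Real.exp (∑ i ∈ range (s - 1), (r (i + 1) : ℝ) * Real.log (r i)) := by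
    rw [Real.exp_sum]
    refine Finset.prod_congr rfl fun i hi => ?_
    have hi' := mem_range.mp hi
    rw [Real.exp_nat_mul, Real.exp_log (hrpos i (by omega))]
  have hR : ∏ i ∈ range s, (r i : ℝ) ^ (r i) =
      Real.exp (∑ i ∈ range s, (r i : ℝ) * Real.log (r i)) := by
    rw [Real.exp_sum]
    refine Finset.prod_congr rfl fun i hi => ?_
    rw [Real.exp_nat_mul, Real.exp_log (hrpos i (mem_range.mp hi))]
  have hprod : ∏ i ∈ range (s - 1), (r i : ℝ) ^ (r (i + 1)) ≤
      ∏ i ∈ range s, (r i : ℝ) ^ (r i) := by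
    rw [hL, hR]
    exact Real.exp_le_exp.mpr (rearrange_sum s hs r hr)
  calc Real.exp (-(k : ℝ)) * ∏ i ∈ range (s - 1), (r i : ℝ) ^ (r (i + 1))
      ≤ Real.exp (-(k : ℝ)) * ∏ i ∈ range s, (r i : ℝ) ^ (r i) := by
        apply mul_le_mul_of_nonneg_left hprod (Real.exp_nonneg _)
    _ = ∏ i ∈ range s, (Real.exp (-(r i : ℝ)) * (r i : ℝ) ^ (r i)) := by
        rw [Finset.prod_mul_distrib, ← Real.exp_sum]
        rw [hk]
        push_cast
        rw [← Finset.sum_neg_distrib]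
    _ ≤ ∏ i ∈ range s, ((r i).factorial : ℝ) := by
        apply Finset.prod_le_prod
        · intro i _; positivity
        · intro i _; exact exp_neg_mul_pow_le_factorial (r i)
end
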